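/- Let X be a real Hilbert space, let T : X → X, and let α ∈ (0,1). Then T is α-averaged if and only if T is the resolvent of a maximally ρ-comonotone operator A : X ⇉ X where ρ = 1/(2α) − 1 > −1/2 (equivalently, α = 1/(2(ρ + 1))). -/
import Mathlib


open RealInnerProductSpace

variable {X : Type*} [NormedAddCommGroup X] [InnerProductSpace ℝ X] [CompleteSpace X]

/-- `A` is `ρ`-comonotone. -/
def Comonotone (ρ : ℝ) (A : X → Set X) : Prop :=
  ∀ ⦃x u y v : X⦄, u ∈ A x → v ∈ A y → ρ * ‖u - v‖ ^ 2 ≤ ⟪x - y, u - v⟫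

/-- `A` is maximally `ρ`-comonotone. -/
def MaxComonotone (ρ : ℝ) (A : X → Set X) : Prop :=
  Comonotone ρ A ∧ ∀ B : X → Set X, Comonotone ρ B → (∀ x, A x ⊆ B x) → ∀ x, B x ⊆ A x

/-- `T` is nonexpansive. -/
def Nonexpansive (T : X → X) : Prop := ∀ x y : X, ‖T x - T y‖ ≤ ‖x - y‖

/-- `T` is `α`-averaged (for `α ∈ (0,1)`): `T = (1 - α) Id + α N` with `N` nonexpansive. -/
def Averaged (α : ℝ) (T : X → X) : Prop :=
  ∃ N : X → X, Nonexpansive N ∧ ∀ x : X, T x = (1 - α) • x + α • N x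

private lemma expand_sq_sub' (c₁ c₂ : ℝ) (s d : X) :
    ‖c₁ • s - c₂ • d‖ ^ 2 =
      c₁ ^ 2 * ‖s‖ ^ 2 - 2 * (c₁ * c₂) * ⟪s, d⟫ + c₂ ^ 2 * ‖d‖ ^ 2 := by
  rw [norm_sub_sq_real, real_inner_smul_left, real_inner_smul_right, norm_smul, norm_smul,
    mul_pow, mul_pow]
  simp only [Real.norm_eq_abs, sq_abs]
  ring

private lemma aux_le_of_sq_le_sq {a b : ℝ} (ha : 0 ≤ a) (hb : 0 ≤ b) (h : a ^ 2 ≤ b ^ 2) :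
    a ≤ b := by nlinarith

theorem stmt13 (T : X → X) (α : ℝ) (hα0 : 0 < α) (hα1 : α < 1) :
    Averaged α T ↔
      ∃ A : X → Set X, MaxComonotone (1 / (2 * α) - 1) A ∧
        ∀ x u : X, T x = u ↔ x - u ∈ A u := by
  constructor
  · rintro ⟨N, hN, hT⟩
    refine ⟨fun u => {w | T (u + w) = u}, ⟨?_, ?_⟩, ?_⟩
    · -- comonotone
      intro x u y v hu hv
      simp only [Set.mem_setOf_eq] at hu hv
      have h1 : (1 - α) • (x + u) + α • N (x + u) = x := (hT (x + u)).symm.trans hu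
      have h2 : (1 - α) • (y + v) + α • N (y + v) = y := (hT (y + v)).symm.trans hv
      have hkey : α • N (x + u) - α • N (y + v) = α • (x - y) - (1 - α) • (u - v) := by
        linear_combination (norm := module) h1 - h2
      have hne : ‖N (x + u) - N (y + v)‖ ≤ ‖x + u - (y + v)‖ := hN _ _
      have hd : x + u - (y + v) = (x - y) + (u - v) := by abel
      rw [hd] at hne
      have hsq : ‖α • (x - y) - (1 - α) • (u - v)‖ ^ 2 ≤
          α ^ 2 * ‖(x - y) + (u - v)‖ ^ 2 := by
        rw [← hkey, ← smul_sub, norm_smul, Real.norm_eq_abs, abs_of_pos hα0, mul_pow]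
        exact mul_le_mul_of_nonneg_left (pow_le_pow_left₀ (norm_nonneg _) hne 2)
          (by positivity)
      rw [expand_sq_sub', norm_add_sq_real] at hsq
      have hstep : (1 - 2 * α) * ‖u - v‖ ^ 2 ≤ 2 * α * ⟪x - y, u - v⟫ := by nlinarith
      rw [show 1 / (2 * α) - 1 = (1 - 2 * α) / (2 * α) by field_simp,
        div_mul_eq_mul_div, div_le_iff₀ (by positivity)]
      linarith
    · -- maximal
      intro B hB hAB x w hw
      have hmemA : (x + w) - T (x + w) ∈ (fun u => {w | T (u + w) = u}) (T (x + w)) := by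
        simp only [Set.mem_setOf_eq]
        rw [show T (x + w) + (x + w - T (x + w)) = x + w by abel]
      have hmemB : (x + w) - T (x + w) ∈ B (T (x + w)) := hAB _ hmemA
      have hcomp := hB hw hmemB
      have hve : w - (x + w - T (x + w)) = T (x + w) - x := by abel
      rw [hve] at hcomp
      have hin : ⟪x - T (x + w), T (x + w) - x⟫ = -‖T (x + w) - x‖ ^ 2 := by
        rw [show x - T (x + w) = -(T (x + w) - x) by abel, inner_neg_left,
          real_inner_self_eq_norm_sq]
      rw [hin] at hcomp
      have hpos : (0:ℝ) < 1 / (2 * α) := by positivity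
      have hzero : ‖T (x + w) - x‖ ^ 2 ≤ 0 := by nlinarith
      have hux : T (x + w) = x := by
        have := le_antisymm hzero (by positivity)
        rw [pow_eq_zero_iff (by norm_num), norm_eq_zero, sub_eq_zero] at this
        exact this
      exact hux
    · intro x u
      have he : u + (x - u) = x := by abel
      simp only [Set.mem_setOf_eq, he]
  · rintro ⟨A, ⟨hA, -⟩, hres⟩
    refine ⟨fun x => α⁻¹ • (T x - (1 - α) • x), ?_, ?_⟩
    · intro x y
      have hx : x - T x ∈ A (T x) := (hres x (T x)).mp rfl
      have hy : y - T y ∈ A (T y) := (hres y (T y)).mp rfl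
      have hc := hA hx hy
      have hd : x - T x - (y - T y) = (x - y) - (T x - T y) := by abel
      rw [hd] at hc
      have hinner : ⟪T x - T y, (x - y) - (T x - T y)⟫
          = ⟪x - y, T x - T y⟫ - ‖T x - T y‖ ^ 2 := by
        rw [inner_sub_right, real_inner_self_eq_norm_sq, real_inner_comm]
      rw [hinner] at hc
      have hsc : ‖(x - y) - (T x - T y)‖ ^ 2
          = ‖x - y‖ ^ 2 - 2 * ⟪x - y, T x - T y⟫ + ‖T x - T y‖ ^ 2 := by
        rw [norm_sub_sq_real]
      rw [hsc] at hc
      have hc2 : (1 - 2 * α) * (‖x - y‖ ^ 2 - 2 * ⟪x - y, T x - T y⟫ + ‖T x - T y‖ ^ 2)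
          ≤ 2 * α * (⟪x - y, T x - T y⟫ - ‖T x - T y‖ ^ 2) := by
        have he : (1 - 2 * α) * (‖x - y‖ ^ 2 - 2 * ⟪x - y, T x - T y⟫ + ‖T x - T y‖ ^ 2)
            = (2 * α) * ((1 / (2 * α) - 1) *
              (‖x - y‖ ^ 2 - 2 * ⟪x - y, T x - T y⟫ + ‖T x - T y‖ ^ 2)) := by
          field_simp
        rw [he]
        exact mul_le_mul_of_nonneg_left hc (by positivity)
      have hNsub : α⁻¹ • (T x - (1 - α) • x) - α⁻¹ • (T y - (1 - α) • y)
          = α⁻¹ • ((1:ℝ) • (T x - T y) - (1 - α) • (x - y)) := by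
        rw [← smul_sub]
        congr 1
        rw [one_smul]
        simp only [smul_sub]
        abel
      simp only
      rw [hNsub, norm_smul, Real.norm_eq_abs, abs_of_pos (by positivity : (0:ℝ) < α⁻¹),
        inv_mul_le_iff₀ hα0]
      apply aux_le_of_sq_le_sq (norm_nonneg _) (by positivity)
      rw [expand_sq_sub', mul_pow]
      have hic : ⟪T x - T y, x - y⟫ = ⟪x - y, T x - T y⟫ := real_inner_comm _ _
      rw [hic]
      nlinarith [hc2, hα0]
    · intro x
      simp only
      rw [smul_smul, mul_inv_cancel₀ hα0.ne', one_smul]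
      abel
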